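/- Let F be a definite Horn formula such that F ⊨ B → B' holds for every clause B' → x ∈ F. Then F is logically equivalent to HCLOSE(RCN(B,F),F), where HCLOSE(H,F) = {B' → x | F ⊨ B' → x, x ∈ H \ B', and no proper subset B'' ⊂ B' satisfies F ⊨ B'' → x}. -/

import Mathlib

/-- A definite Horn clause: a finite body of variables implying a head variable. -/
structure Clause (V : Type) where
  body : Finset V
  head : V
deriving DecidableEq

variable {V : Type} [DecidableEq V]

/-- A model satisfies a clause when the head is true if the whole body is true. -/
def satClause (M : V → Prop) (c : Clause V) : Prop :=
  (∀ v ∈ c.body, M v) → M c.head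

/-- A model satisfies a set of clauses when it satisfies each of them. -/
def satSet (M : V → Prop) (S : Set (Clause V)) : Prop :=
  ∀ c ∈ S, satClause M c

/-- `EntV S A x`: the formula `S` together with the variables `A` entails variable `x`. -/
def EntV (S : Set (Clause V)) (A : Set V) (x : V) : Prop :=
  ∀ M : V → Prop, satSet M S → (∀ v ∈ A, M v) → M x

/-- `EntVS S A B`: `S ⊨ A → B`, i.e. `S` with `A` entails every variable of `B`. -/
def EntVS (S : Set (Clause V)) (A B : Set V) : Prop :=
  ∀ x ∈ B, EntV S A x

/-- `EntF S T`: `S` entails every clause of `T`. -/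
def EntF (S T : Set (Clause V)) : Prop :=
  ∀ c ∈ T, EntV S (↑c.body) c.head

/-- Logical equivalence of two sets of clauses: same models. -/
def EquivS (S T : Set (Clause V)) : Prop :=
  ∀ M : V → Prop, satSet M S ↔ satSet M T

/-- `BCN`: all variable consequences of `B` under the formula `S`. -/
def BCN (S : Set (Clause V)) (B : Set V) : Set V :=
  {x | EntV S B x}

/-- `RCN`: real consequences of `B` under `S`. -/
def RCN (S : Set (Clause V)) (B : Set V) : Set V :=
  {x | EntV S (BCN S B \ {x}) x}

/-- `F^x`: `F` without the clauses mentioning `x` in head or body. -/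
def Fx (F : Finset (Clause V)) (x : V) : Finset (Clause V) :=
  F.filter (fun c => x ∉ c.body ∧ c.head ≠ x)

/-- A formula is single-head when no two distinct clauses share the head. -/
def SingleHead (F : Finset (Clause V)) : Prop :=
  ∀ c ∈ F, ∀ d ∈ F, c.head = d.head → c = d

/-- `UCL(B,F)`: non-tautological clauses of `F` whose body is entailed by `B` according to `F`. -/
def UCL (B : Set V) (F : Finset (Clause V)) : Set (Clause V) :=
  {c | c ∈ F ∧ c.head ∉ c.body ∧ EntVS (↑F) B (↑c.body)}

/-- `UCL(B,G,F)`: clauses of `G` whose body is entailed by `B` according to `F`. -/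
def UCL3 (B : Set V) (G F : Finset (Clause V)) : Set (Clause V) :=
  {c | c ∈ G ∧ EntVS (↑F) B (↑c.body)}

/-- `SCL(B,F)`: clauses of strictly entailed bodies. -/
def SCL (B : Set V) (F : Finset (Clause V)) : Set (Clause V) :=
  {c | c.head ∉ c.body ∧ EntV (↑F) (↑c.body) c.head ∧
       EntVS (↑F) B (↑c.body) ∧ ¬ EntVS (↑F) (↑c.body) B}

/-- `BCL(B,F)`: clauses of equivalent bodies. -/
def BCL (B : Set V) (F : Finset (Clause V)) : Set (Clause V) :=
  {c | c.head ∉ c.body ∧ EntV (↑F) (↑c.body) c.head ∧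
       EntVS (↑F) B (↑c.body) ∧ EntVS (↑F) (↑c.body) B}

/-- `HCLOSE(H,S)`: body-minimal non-tautological entailed clauses with head in `H`. -/
def HCLOSE (H : Set V) (S : Set (Clause V)) : Set (Clause V) :=
  {c | EntV S (↑c.body) c.head ∧ c.head ∈ H ∧ c.head ∉ c.body ∧
       ∀ B'' : Finset V, B'' ⊂ c.body → ¬ EntV S (↑B'') c.head}

/-- One resolution step: resolve a clause of `S` into the body of `c`. -/
def Step (S : Set (Clause V)) (c d : Clause V) : Prop :=
  ∃ e ∈ S, e.head ∈ c.body ∧ d = ⟨(c.body \ {e.head}) ∪ e.body, c.head⟩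

lemma exists_min_body (S : Set (Clause V)) (x : V) :
    ∀ b : Finset V, EntV S (↑b) x →
      ∃ b' ⊆ b, EntV S (↑b') x ∧ ∀ b'' ⊂ b', ¬ EntV S (↑b'') x := by
  intro b
  induction b using Finset.strongInductionOn with
  | _ b ih =>
    intro hb
    by_cases hcase : ∃ b'' ⊂ b, EntV S (↑b'') x
    · obtain ⟨b'', hsub, hent⟩ := hcase
      obtain ⟨b', hb'sub, h1, h2⟩ := ih b'' hsub hent
      exact ⟨b', hb'sub.trans hsub.subset, h1, h2⟩
    · exact ⟨b, le_refl b, hb, fun b'' hss hent => hcase ⟨b'', hss, hent⟩⟩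

theorem stmt16 (F : Finset (Clause V)) (B : Set V)
    (h : ∀ c ∈ F, EntVS (↑F) B (↑c.body)) :
    EquivS (↑F) (HCLOSE (RCN (↑F) B) (↑F)) := by
  intro M
  constructor
  · intro hM c hc
    exact fun hbody => hc.1 M hM hbody
  · intro hM c hc hbody
    by_cases hh : c.head ∈ c.body
    · exact hbody _ hh
    · -- c.head ∈ RCN F B
      have hrcn : c.head ∈ RCN (↑F) B := by
        intro N hN hA
        have : ∀ v ∈ (c.body : Set V), N v := by
          intro v hv
          apply hA
          refine ⟨h c hc v hv, ?_⟩
          intro he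
          rw [Set.mem_singleton_iff] at he
          exact hh (he ▸ hv)
        exact hN c hc this
      have hent : EntV (↑F) (↑c.body) c.head := fun N hN hb => hN c hc hb
      obtain ⟨b', hsub, h1, h2⟩ := exists_min_body (↑F) c.head c.body hent
      have hmem : (⟨b', c.head⟩ : Clause V) ∈ HCLOSE (RCN (↑F) B) (↑F) :=
        ⟨h1, hrcn, fun hin => hh (hsub hin), h2⟩
      exact hM (⟨b', c.head⟩ : Clause V) hmem (fun v hv => hbody v (hsub hv))
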